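/- Let d ≥ 2 and n ≥ 0, and let r_n^d = binom(n+d−1, n) be the dimension of the space P_n^d of real homogeneous polynomials of degree n in d variables. There exist points ξ_1, …, ξ_{r_n^d} ∈ S^{d-1} such that the polynomials x ↦ ⟨x, ξ_j⟩^n, for j = 1, …, r_n^d, form a basis of P_n^d. -/

import Mathlib

open MvPolynomial Metric
open Finset

/-- The homogeneous polynomial `x ↦ ⟨x, ξ⟩ⁿ` for a point `ξ ∈ ℝ^d`. -/
noncomputable def innerPow (d n : ℕ) (ξ : EuclideanSpace ℝ (Fin d)) :
    MvPolynomial (Fin d) ℝ :=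
  (∑ i : Fin d, MvPolynomial.C (ξ i) * X i) ^ n

namespace ZonalAux

/-- Exponent conversion from functions to finsupps. -/
noncomputable def fexp (d : ℕ) (k : Fin d → ℕ) : Fin d →₀ ℕ :=
  Finsupp.equivFunOnFinite.symm k

lemma fexp_injective (d : ℕ) : Function.Injective (fexp d) :=
  Finsupp.equivFunOnFinite.symm.injective

lemma fexp_apply (d : ℕ) (k : Fin d → ℕ) (i : Fin d) : fexp d k i = k i := rfl

lemma fexp_coe (d : ℕ) (v : Fin d →₀ ℕ) : fexp d ⇑v = v :=
  Finsupp.equivFunOnFinite_symm_coe v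

lemma monomial_fexp (d : ℕ) (k : Fin d → ℕ) (a : ℝ) :
    monomial (fexp d k) a = C a * ∏ i : Fin d, X i ^ k i := by
  rw [monomial_eq, Finsupp.prod_fintype]
  · rfl
  · intro i; exact pow_zero _

lemma degree_fexp (d : ℕ) (k : Fin d → ℕ) : (fexp d k).degree = ∑ i : Fin d, k i := by
  rw [Finsupp.degree]
  apply Finset.sum_subset (Finset.subset_univ _)
  intro i _ hi
  exact Finsupp.notMem_support_iff.mp hi

lemma innerPow_eq_sum (d n : ℕ) (ξ : Fin d → ℝ) :
    ((∑ i : Fin d, C (ξ i) * X i : MvPolynomial (Fin d) ℝ)) ^ n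
      = ∑ k ∈ piAntidiag (univ : Finset (Fin d)) n,
          monomial (fexp d k) ((Nat.multinomial univ k : ℝ) * ∏ i : Fin d, ξ i ^ k i) := by
  rw [Finset.sum_pow_eq_sum_piAntidiag]
  refine Finset.sum_congr rfl fun k hk => ?_
  rw [monomial_fexp]
  simp only [mul_pow, Finset.prod_mul_distrib, ← C_pow, ← map_prod]
  rw [C_mul, ← mul_assoc, map_natCast]

/-- The "dual" polynomial associated to a linear functional. -/
noncomputable def Qf (d n : ℕ) (f : MvPolynomial (Fin d) ℝ →ₗ[ℝ] ℝ) :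
    MvPolynomial (Fin d) ℝ :=
  ∑ k ∈ piAntidiag (univ : Finset (Fin d)) n,
    monomial (fexp d k) ((Nat.multinomial univ k : ℝ) * f (monomial (fexp d k) 1))

lemma eval_Qf (d n : ℕ) (f : MvPolynomial (Fin d) ℝ →ₗ[ℝ] ℝ) (ξ : Fin d → ℝ) :
    eval ξ (Qf d n f) = f (((∑ i : Fin d, C (ξ i) * X i) : MvPolynomial (Fin d) ℝ) ^ n) := by
  rw [innerPow_eq_sum, map_sum, Qf, map_sum]
  refine Finset.sum_congr rfl fun k hk => ?_
  have h1 : (monomial (fexp d k)) ((Nat.multinomial univ k : ℝ) * ∏ i : Fin d, ξ i ^ k i)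
      = ((Nat.multinomial univ k : ℝ) * ∏ i : Fin d, ξ i ^ k i) • monomial (fexp d k) (1 : ℝ) := by
    rw [smul_monomial, smul_eq_mul, mul_one]
  rw [h1, map_smul, eval_monomial, Finsupp.prod_fintype _ _ (fun i => pow_zero _)]
  simp only [fexp_apply, smul_eq_mul]
  ring

lemma innerPow_mem (d n : ℕ) (ξ : EuclideanSpace ℝ (Fin d)) :
    innerPow d n ξ ∈ homogeneousSubmodule (Fin d) ℝ n := by
  rw [mem_homogeneousSubmodule, innerPow]
  have h1 : (∑ i : Fin d, C (ξ i) * X i : MvPolynomial (Fin d) ℝ).IsHomogeneous 1 :=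
    IsHomogeneous.sum _ _ _ fun i _ => isHomogeneous_C_mul_X _ _
  simpa using h1.pow n

lemma innerPow_smul (d n : ℕ) (r : ℝ) (ξ : EuclideanSpace ℝ (Fin d)) :
    innerPow d n (r • ξ) = (r ^ n) • innerPow d n ξ := by
  rw [innerPow, innerPow]
  have h : (∑ i : Fin d, C ((r • ξ) i) * X i : MvPolynomial (Fin d) ℝ)
      = C r * ∑ i : Fin d, C (ξ i) * X i := by
    rw [Finset.mul_sum]
    refine Finset.sum_congr rfl fun i _ => ?_
    rw [← mul_assoc, ← C_mul]
    rfl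
  rw [h, mul_pow, ← C_pow, ← smul_eq_C_mul]

set_option maxHeartbeats 1000000 in
set_option synthInstance.maxHeartbeats 1000000 in
lemma span_innerPow_sphere (d n : ℕ) (hd : 2 ≤ d) :
    Submodule.span ℝ (Set.range fun ξ : sphere (0 : EuclideanSpace ℝ (Fin d)) 1 =>
      innerPow d n ξ) = homogeneousSubmodule (Fin d) ℝ n := by
  set W := Submodule.span ℝ (Set.range fun ξ : sphere (0 : EuclideanSpace ℝ (Fin d)) 1 =>
      innerPow d n ξ) with hW
  apply le_antisymm
  · rw [Submodule.span_le]
    rintro _ ⟨ξ, rfl⟩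
    exact innerPow_mem d n _
  · have u0 : (EuclideanSpace.single (⟨0, by omega⟩ : Fin d) (1 : ℝ))
        ∈ sphere (0 : EuclideanSpace ℝ (Fin d)) 1 := by
      simp [mem_sphere_zero_iff_norm, EuclideanSpace.norm_single]
    have hall : ∀ x : EuclideanSpace ℝ (Fin d), innerPow d n x ∈ W := by
      intro x
      by_cases hx : x = 0
      · subst hx
        have h0 : (0 : EuclideanSpace ℝ (Fin d))
            = (0 : ℝ) • (EuclideanSpace.single (⟨0, by omega⟩ : Fin d) (1 : ℝ)) := by
          rw [zero_smul]
        rw [h0, innerPow_smul]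
        exact Submodule.smul_mem _ _
          (Submodule.subset_span ⟨⟨_, u0⟩, rfl⟩)
      · have hnx : ‖x‖ ≠ 0 := norm_ne_zero_iff.mpr hx
        have hu : (‖x‖⁻¹ • x) ∈ sphere (0 : EuclideanSpace ℝ (Fin d)) 1 := by
          simp [mem_sphere_zero_iff_norm, norm_smul, inv_mul_cancel₀ hnx]
        have hxu : x = ‖x‖ • (‖x‖⁻¹ • x) := (smul_inv_smul₀ hnx x).symm
        rw [hxu, innerPow_smul]
        exact Submodule.smul_mem _ _
          (Submodule.subset_span ⟨⟨_, hu⟩, rfl⟩)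
    intro p hp
    by_contra hpW
    have hp0 : (Submodule.Quotient.mk p : MvPolynomial (Fin d) ℝ ⧸ W) ≠ 0 := by
      simpa [Submodule.Quotient.mk_eq_zero] using hpW
    have hex : ¬ ∀ g : Module.Dual ℝ (MvPolynomial (Fin d) ℝ ⧸ W),
        g (Submodule.Quotient.mk p) = 0 := by
      intro h
      exact hp0 ((Module.forall_dual_apply_eq_zero_iff ℝ _).mp h)
    obtain ⟨g, hg⟩ := not_forall.mp hex
    set f : MvPolynomial (Fin d) ℝ →ₗ[ℝ] ℝ := g ∘ₗ W.mkQ with hf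
    have hfW : ∀ w ∈ W, f w = 0 := by
      intro w hw
      have : W.mkQ w = 0 := by
        rw [Submodule.mkQ_apply, Submodule.Quotient.mk_eq_zero]
        exact hw
      simp [hf, this]
    have hfS : ∀ ξ : EuclideanSpace ℝ (Fin d),
        f (((∑ i : Fin d, C (ξ i) * X i) : MvPolynomial (Fin d) ℝ) ^ n) = 0 :=
      fun ξ => hfW _ (hall ξ)
    have hQ0 : Qf d n f = 0 := by
      apply MvPolynomial.funext
      intro x
      rw [eval_Qf, map_zero]
      exact hfS (WithLp.toLp 2 x)
    have hmono : ∀ v : Fin d →₀ ℕ, v.degree = n → f (monomial v 1) = 0 := by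
      intro v hv
      have hk : (⇑v : Fin d → ℕ) ∈ piAntidiag (univ : Finset (Fin d)) n := by
        rw [Finset.mem_piAntidiag]
        refine ⟨?_, fun i _ => mem_univ i⟩
        have := degree_fexp d ⇑v
        rw [fexp_coe] at this
        rw [← this, hv]
      have hcoef : coeff v (Qf d n f)
          = (Nat.multinomial univ ⇑v : ℝ) * f (monomial v 1) := by
        rw [Qf, coeff_sum]
        rw [Finset.sum_eq_single (⇑v : Fin d → ℕ)]
        · rw [fexp_coe, coeff_monomial, if_pos rfl]
        · intro k _ hne
          rw [coeff_monomial, if_neg]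
          intro h
          apply hne
          apply fexp_injective d
          rw [fexp_coe]
          exact h
        · intro h; exact absurd hk h
      rw [hQ0, coeff_zero] at hcoef
      have hmn : (Nat.multinomial univ ⇑v : ℝ) ≠ 0 := by
        exact_mod_cast (Nat.multinomial_pos _ _).ne'
      exact (mul_eq_zero.mp hcoef.symm).resolve_left hmn
    have hfp : f p = 0 := by
      conv_lhs => rw [as_sum p]
      rw [map_sum]
      apply Finset.sum_eq_zero
      intro v hv
      have hdeg : v.degree = n := by
        by_contra h
        exact (mem_support_iff.mp hv) (hp.coeff_eq_zero h)
      have h2 : monomial v (coeff v p) = (coeff v p) • monomial v (1 : ℝ) := by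
        rw [smul_monomial, smul_eq_mul, mul_one]
      rw [h2, map_smul, hmono v hdeg, smul_zero]
    apply hg
    simpa [hf] using hfp

/-- The finset of degree-`n` monomials. -/
noncomputable def Mset (d n : ℕ) : Finset (MvPolynomial (Fin d) ℝ) :=
  (piAntidiag (univ : Finset (Fin d)) n).image (fun k => monomial (fexp d k) (1 : ℝ))

lemma card_piAntidiag (d n : ℕ) :
    (piAntidiag (univ : Finset (Fin d)) n).card = (n + d - 1).choose n := by
  rw [← Finset.map_sym_eq_piAntidiag, Finset.card_map, Finset.sym_univ, Finset.card_univ,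
    Sym.card_sym_eq_multichoose, Nat.multichoose_eq, Fintype.card_fin]
  congr 2
  omega

lemma card_Mset (d n : ℕ) : (Mset d n).card = (n + d - 1).choose n := by
  have hinj : Function.Injective (fun k : Fin d → ℕ => monomial (fexp d k) (1 : ℝ)) :=
    fun a b h => fexp_injective d (monomial_left_injective one_ne_zero h)
  rw [Mset, Finset.card_image_of_injective _ hinj]
  exact card_piAntidiag d n

lemma indep_Mset (d n : ℕ) :
    LinearIndependent ℝ ((↑) : ↥((Mset d n : Finset (MvPolynomial (Fin d) ℝ)) :
      Set (MvPolynomial (Fin d) ℝ)) → MvPolynomial (Fin d) ℝ) := by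
  have hb := (basisMonomials (Fin d) ℝ).linearIndependent
  have h := (linearIndepOn_id_range_iff hb.injective).mpr hb
  refine h.mono fun x hx => ?_
  simp only [Mset, coe_image, Set.mem_image, mem_coe] at hx
  obtain ⟨k, -, rfl⟩ := hx
  exact ⟨fexp d k, by rw [coe_basisMonomials]⟩

lemma span_Mset (d n : ℕ) :
    Submodule.span ℝ ((Mset d n : Set (MvPolynomial (Fin d) ℝ)))
      = homogeneousSubmodule (Fin d) ℝ n := by
  apply le_antisymm
  · rw [Submodule.span_le]
    intro q hq
    simp only [Mset, coe_image, Set.mem_image, mem_coe] at hq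
    obtain ⟨k, hk, rfl⟩ := hq
    rw [SetLike.mem_coe, mem_homogeneousSubmodule]
    apply isHomogeneous_monomial
    rw [degree_fexp]
    exact (Finset.mem_piAntidiag.mp hk).1
  · intro p hp
    nth_rewrite 1 [as_sum p]
    apply Submodule.sum_mem
    intro v hv
    have hdeg : v.degree = n := by
      by_contra h
      exact (mem_support_iff.mp hv) (hp.coeff_eq_zero h)
    have h2 : monomial v (coeff v p) = (coeff v p) • monomial v (1 : ℝ) := by
      rw [smul_monomial, smul_eq_mul, mul_one]
    rw [h2]
    apply Submodule.smul_mem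
    apply Submodule.subset_span
    simp only [Mset, coe_image, Set.mem_image, mem_coe]
    refine ⟨⇑v, ?_, by rw [fexp_coe]⟩
    rw [Finset.mem_piAntidiag]
    refine ⟨?_, fun i _ => mem_univ i⟩
    have := degree_fexp d ⇑v
    rw [fexp_coe] at this
    rw [← this, hdeg]

lemma finrank_hs (d n : ℕ) :
    Module.finrank ℝ (homogeneousSubmodule (Fin d) ℝ n) = (n + d - 1).choose n := by
  rw [← span_Mset d n]
  haveI : Fintype ((Mset d n : Set (MvPolynomial (Fin d) ℝ))) := FinsetCoe.fintype _
  rw [finrank_span_set_eq_card (indep_Mset d n), Finset.toFinset_coe]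
  exact card_Mset d n

end ZonalAux

open ZonalAux in
/-- There exist points `ξ_1, …, ξ_r` on the sphere (`r = dim P_n^d = C(n+d−1, n)`) such that
the powers of linear forms `⟨x, ξ_j⟩ⁿ` form a basis of the space `P_n^d` of homogeneous
polynomials of degree `n`. -/
theorem exists_zonal_basis_of_homogeneous (d n : ℕ) (hd : 2 ≤ d) :
    ∃ ξ : Fin ((n + d - 1).choose n) → sphere (0 : EuclideanSpace ℝ (Fin d)) 1,
      LinearIndependent ℝ (fun j => innerPow d n (ξ j : EuclideanSpace ℝ (Fin d))) ∧
      Submodule.span ℝ (Set.range fun j => innerPow d n (ξ j : EuclideanSpace ℝ (Fin d))) =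
        homogeneousSubmodule (Fin d) ℝ n := by
  classical
  set S : Set (MvPolynomial (Fin d) ℝ) :=
    Set.range fun ξ : sphere (0 : EuclideanSpace ℝ (Fin d)) 1 => innerPow d n ξ with hS
  obtain ⟨t, htS, htspan, htindep⟩ := exists_linearIndependent ℝ S
  have hspanS : Submodule.span ℝ S = homogeneousSubmodule (Fin d) ℝ n :=
    span_innerPow_sphere d n hd
  have htV : Submodule.span ℝ t = homogeneousSubmodule (Fin d) ℝ n := htspan.trans hspanS
  haveI hfin : Finite ↥t := by
    apply htindep.finite_of_le_span_finite _ (↑(Mset d n) : Set (MvPolynomial (Fin d) ℝ))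
    rw [Subtype.range_coe, span_Mset d n, ← htV]
    exact Submodule.subset_span
  haveI : Fintype ↥t := Fintype.ofFinite _
  have hcard : Fintype.card ↥t = (n + d - 1).choose n := by
    have h1 := finrank_span_set_eq_card htindep
    rw [htV, finrank_hs d n] at h1
    rw [← Set.toFinset_card]
    exact h1.symm
  have e : Fin ((n + d - 1).choose n) ≃ ↥t := (Fintype.equivFinOfCardEq hcard).symm
  have hchoice : ∀ j : Fin ((n + d - 1).choose n),
      ∃ u : sphere (0 : EuclideanSpace ℝ (Fin d)) 1,
        innerPow d n (u : EuclideanSpace ℝ (Fin d)) = ((e j : MvPolynomial (Fin d) ℝ)) :=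
    fun j => htS (e j).2
  choose ξ hξ using hchoice
  refine ⟨ξ, ?_, ?_⟩
  · have heq : (fun j => innerPow d n (ξ j : EuclideanSpace ℝ (Fin d))) =
        (fun x : ↥t => (x : MvPolynomial (Fin d) ℝ)) ∘ e := by
      funext j; exact hξ j
    rw [heq]
    exact htindep.comp e e.injective
  · have heq : (Set.range fun j => innerPow d n (ξ j : EuclideanSpace ℝ (Fin d))) = t := by
      ext q
      constructor
      · rintro ⟨j, rfl⟩
        show innerPow d n (ξ j : EuclideanSpace ℝ (Fin d)) ∈ t
        rw [hξ j]
        exact (e j).2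
      · intro hq
        refine ⟨e.symm ⟨q, hq⟩, ?_⟩
        show innerPow d n (ξ (e.symm ⟨q, hq⟩) : EuclideanSpace ℝ (Fin d)) = q
        rw [hξ, e.apply_symm_apply]
    rw [heq, htV]
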